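/- Let μ be an infinite cardinal and λ a cardinal, and identify μ with its initial ordinal. Let A be a set of functions ν : μ → λ. Assume that for every ordinal α < μ and every function η : α → λ, the set {ν(α) : ν ∈ A and ν↾α = η} is finite (where ν↾α is the restriction of ν to {β : β < α}). Then |A| ≤ 2^μ. -/

import Mathlib

open Cardinal

/-- Let `μ` be an infinite cardinal and `λ` a cardinal, with `μ` identified with its
initial ordinal. Let `A` be a set of functions `ν : μ → λ`. Assume that for every
ordinal `α < μ` and every function `η : α → λ`, the set
`{ν(α) : ν ∈ A and ν↾α = η}` is finite. Then `|A| ≤ 2 ^ μ`. -/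
theorem card_le_two_power_of_finitely_branching (μ lam : Cardinal) (hμ : ℵ₀ ≤ μ)
    (A : Set (μ.ord.ToType → lam.ord.ToType))
    (hfin : ∀ α : μ.ord.ToType, ∀ η : μ.ord.ToType → lam.ord.ToType,
      {x : lam.ord.ToType | ∃ ν ∈ A, (∀ β < α, ν β = η β) ∧ ν α = x}.Finite) :
    #A ≤ 2 ^ μ := by
  classical
  set F : A → (μ.ord.ToType → ℕ) := fun ν α =>
    ((hfin α ν.1).toFinset.filter (fun x => x < ν.1 α)).card with hF
  have hmem : ∀ (ν : A) (α), ν.1 α ∈ (hfin α ν.1).toFinset := by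
    intro ν α
    simp only [Set.Finite.mem_toFinset, Set.mem_setOf_eq]
    exact ⟨ν.1, ν.2, fun β _ => rfl, rfl⟩
  have key : ∀ (S : Finset lam.ord.ToType) (x y : lam.ord.ToType), x ∈ S → x < y →
      (S.filter (fun a => a < x)).card < (S.filter (fun a => a < y)).card := by
    intro S x y hx hxy
    apply Finset.card_lt_card
    constructor
    · intro a ha
      rw [Finset.mem_filter] at ha ⊢
      exact ⟨ha.1, lt_trans ha.2 hxy⟩
    · intro hcon
      have := hcon (Finset.mem_filter.mpr ⟨hx, hxy⟩)
      simp at this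
  have hinj : Function.Injective F := by
    intro ν ν' h
    apply Subtype.ext
    funext α
    induction α using WellFoundedLT.induction with
    | _ α ih =>
    have hset : (hfin α ν.1).toFinset = (hfin α ν'.1).toFinset := by
      ext x
      simp only [Set.Finite.mem_toFinset, Set.mem_setOf_eq]
      constructor
      · rintro ⟨ρ, hρ, hagree, hx⟩
        exact ⟨ρ, hρ, fun β hβ => by rw [hagree β hβ, ih β hβ], hx⟩
      · rintro ⟨ρ, hρ, hagree, hx⟩
        exact ⟨ρ, hρ, fun β hβ => by rw [hagree β hβ, ih β hβ], hx⟩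
    have hα : F ν α = F ν' α := by rw [h]
    simp only [hF, hset] at hα
    have h1 : ν.1 α ∈ (hfin α ν'.1).toFinset := hset ▸ hmem ν α
    have h2 : ν'.1 α ∈ (hfin α ν'.1).toFinset := hmem ν' α
    rcases lt_trichotomy (ν.1 α) (ν'.1 α) with hlt | heq | hgt
    · exact absurd hα (ne_of_lt (key _ _ _ h1 hlt))
    · exact heq
    · exact absurd hα.symm (ne_of_lt (key _ _ _ h2 hgt))
  calc #A ≤ #(μ.ord.ToType → ℕ) := mk_le_of_injective hinj
    _ = ℵ₀ ^ μ := by simp [mk_arrow, mk_ord_toType]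
    _ ≤ (2 ^ ℵ₀) ^ μ := power_le_power_right (cantor ℵ₀).le
    _ = 2 ^ (ℵ₀ * μ) := (power_mul).symm
    _ = 2 ^ μ := by rw [aleph0_mul_eq hμ]
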